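/- arXiv:2502.07168 — 7 statements merged into one kernel-verified Lean document; each statement's English description precedes it below -/
import Mathlib

section
/- Suppose K = 1. The constant mechanism defined by Q*(F,θ) = q* and T*(F,θ) = λ·u(q*) for all F ∈ 𝓕 and all θ ∈ [0,1], where q* = (u')⁻¹(c/λ), is incentive compatible, individually rational, and robustly optimal: its profit guarantee Π(Q*,T*) is at least Π(Q,T) for every incentive compatible and individually rational mechanism (Q,T). -/
open MeasureTheory Set Filter Topology

noncomputable section

/-- The type space for a single good: `Θ = [0,1]`. -/
abbrev Theta1 := Set.Icc (0:ℝ) 1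

/-- The set `𝓕` of Borel probability measures on `Θ = [0,1]` with mean `lam`. -/
def Fcal1 (lam : ℝ) : Set (Measure Theta1) :=
  {F | IsProbabilityMeasure F ∧ ∫ θ, (θ : ℝ) ∂F = lam}

/-- Incentive compatibility for a single-good mechanism. -/
def IC1 (lam : ℝ) (u : ℝ → ℝ) (Q : Measure Theta1 → Theta1 → ℝ)
    (T : Measure Theta1 → Theta1 → ℝ) : Prop :=
  (∀ F ∈ Fcal1 lam, ∀ θ θ' : Theta1,
      (θ : ℝ) * u (Q F θ') - T F θ' ≤ (θ : ℝ) * u (Q F θ) - T F θ) ∧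
  (∀ F ∈ Fcal1 lam, ∀ F' ∈ Fcal1 lam,
      ∫ θ, ((θ : ℝ) * u (Q F' θ) - T F' θ) ∂F ≤
        ∫ θ, ((θ : ℝ) * u (Q F θ) - T F θ) ∂F)

/-- Individual rationality for a single-good mechanism. -/
def IR1 (lam : ℝ) (u : ℝ → ℝ) (Q : Measure Theta1 → Theta1 → ℝ)
    (T : Measure Theta1 → Theta1 → ℝ) : Prop :=
  ∀ F ∈ Fcal1 lam, 0 ≤ ∫ θ, ((θ : ℝ) * u (Q F θ) - T F θ) ∂F

/-- The profit guarantee `Π(Q,T) = inf_{F ∈ 𝓕} E_F[T(F,θ) - c·Q(F,θ)]` (valued in `EReal`). -/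
def guarantee1 (lam c : ℝ) (Q : Measure Theta1 → Theta1 → ℝ)
    (T : Measure Theta1 → Theta1 → ℝ) : EReal :=
  ⨅ F ∈ Fcal1 lam, ((∫ θ, (T F θ - c * Q F θ) ∂F : ℝ) : EReal)

/-- Tangent-line bound for a concave function on `[0,∞)`. -/
lemma tangent_bound {u : ℝ → ℝ} {d q x : ℝ}
    (hconc : ConcaveOn ℝ (Set.Ici 0) u)
    (hq : 0 < q) (hd : HasDerivAt u d q) (hx : 0 ≤ x) :
    u x ≤ u q + d * (x - q) := by
  have hslope : Tendsto (slope u q) (𝓝[≠] q) (𝓝 d) :=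
    hasDerivAt_iff_tendsto_slope.mp hd
  have hR : Tendsto (slope u q) (𝓝[>] q) (𝓝 d) :=
    hslope.mono_left (nhdsWithin_mono q fun z hz => ne_of_gt hz)
  have hL : Tendsto (slope u q) (𝓝[<] q) (𝓝 d) :=
    hslope.mono_left (nhdsWithin_mono q fun z (hz : z < q) => ne_of_lt hz)
  rcases lt_trichotomy x q with hxq | rfl | hqx
  · have key : d ≤ (u q - u x) / (q - x) := by
      refine le_of_tendsto hR ?_
      filter_upwards [self_mem_nhdsWithin] with z hz
      have h1 : (u z - u q) / (z - q) ≤ (u q - u x) / (q - x) :=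
        hconc.slope_anti_adjacent hx (le_of_lt (hq.trans hz)) hxq hz
      simpa [slope_def_field] using h1
    have hpos : 0 < q - x := by linarith
    nlinarith [(le_div_iff₀ hpos).mp key]
  · simp
  · have key : (u x - u q) / (x - q) ≤ d := by
      refine ge_of_tendsto hL ?_
      filter_upwards [Ioo_mem_nhdsLT_of_mem ⟨hq, le_refl q⟩] with z hz
      have h1 : (u x - u q) / (x - q) ≤ (u q - u z) / (q - z) :=
        hconc.slope_anti_adjacent (le_of_lt hz.1) (by linarith [hz.2] : (0:ℝ) ≤ x) hz.2 hqx
      have h2 : slope u q z = (u q - u z) / (q - z) := by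
        rw [slope_def_field, div_eq_div_iff] <;> [ring; linarith [hz.2]; linarith [hz.2]]
      rw [h2]; exact h1
    have hpos : 0 < x - q := by linarith
    nlinarith [(div_le_iff₀ hpos).mp key]

/-- The coordinate function on `Θ = [0,1]` is integrable w.r.t. any probability measure. -/
lemma integrable_coe_theta (F : Measure Theta1) [IsProbabilityMeasure F] :
    Integrable (fun θ : Theta1 => (θ : ℝ)) F := by
  refine (integrable_const (1:ℝ)).mono' ?_ ?_
  · exact (continuous_subtype_val).aestronglyMeasurable
  · filter_upwards with θ
    have h1 := θ.2.1; have h2 := θ.2.2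
    simp only [Real.norm_eq_abs, abs_le]
    constructor <;> linarith

/-- For `K = 1`, the constant mechanism `Q*(F,θ) = q*`,
`T*(F,θ) = λ·u(q*)`, where `q* = (u')⁻¹(c/λ)` (i.e. `λ·u'(q*) = c`), is IC, IR and
robustly optimal among all IC and IR mechanisms. -/
theorem stmt0
    (c lam : ℝ) (hc : 0 < c) (hlam : 0 < lam ∧ lam < 1)
    (u u' : ℝ → ℝ)
    (hu_mono : StrictMonoOn u (Set.Ici 0))
    (hu_conc : StrictConcaveOn ℝ (Set.Ici 0) u)
    (hu_nonneg : ∀ q, 0 ≤ q → 0 ≤ u q)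
    (hu_deriv : ∀ q, 0 < q → HasDerivAt u (u' q) q)
    (hu'_zero : Tendsto u' (nhdsWithin 0 (Set.Ioi 0)) atTop)
    (hu'_top : Tendsto u' atTop (nhds 0))
    (qstar : ℝ) (hqs_pos : 0 < qstar) (hqs : lam * u' qstar = c)
    (Qs Ts : Measure Theta1 → Theta1 → ℝ)
    (hQs : ∀ F θ, Qs F θ = qstar) (hTs : ∀ F θ, Ts F θ = lam * u qstar) :
    IC1 lam u Qs Ts ∧ IR1 lam u Qs Ts ∧
      ∀ Q T : Measure Theta1 → Theta1 → ℝ,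
        (∀ F θ, 0 ≤ Q F θ) → IC1 lam u Q T → IR1 lam u Q T →
          guarantee1 lam c Q T ≤ guarantee1 lam c Qs Ts := by
  obtain ⟨hlam0, hlam1⟩ := hlam
  have hd : HasDerivAt u (u' qstar) qstar := hu_deriv qstar hqs_pos
  -- the constant `q*` maximizes `λ u(q) - c q` over `q ≥ 0`
  have hmax : ∀ q, 0 ≤ q → lam * u q - c * q ≤ lam * u qstar - c * qstar := by
    intro q hq
    have h1 : u q ≤ u qstar + u' qstar * (q - qstar) :=
      tangent_bound hu_conc.concaveOn hqs_pos hd hq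
    have h2 : lam * u q ≤ lam * (u qstar + u' qstar * (q - qstar)) := by
      exact mul_le_mul_of_nonneg_left h1 hlam0.le
    have h3 : lam * (u qstar + u' qstar * (q - qstar))
        = lam * u qstar + c * (q - qstar) := by rw [← hqs]; ring
    linarith
  -- the IR integral of the constant mechanism vanishes
  have hIRint : ∀ F ∈ Fcal1 lam, ∫ θ, ((θ : ℝ) * u (Qs F θ) - Ts F θ) ∂F = 0 := by
    intro F hF
    haveI := hF.1
    have h1 : (fun θ : Theta1 => (θ : ℝ) * u (Qs F θ) - Ts F θ)
        = fun θ : Theta1 => (θ : ℝ) * u qstar - lam * u qstar := by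
      funext θ; rw [hQs, hTs]
    rw [h1, integral_sub ((integrable_coe_theta F).mul_const _) (integrable_const _),
      integral_mul_const, hF.2]
    simp
  refine ⟨⟨?_, ?_⟩, ?_, ?_⟩
  · intro F hF θ θ'; simp [hQs, hTs]
  · intro F hF F' hF'; simp only [hQs, hTs]; exact le_refl _
  · intro F hF; rw [hIRint F hF]
  · intro Q T hQnn hIC hIR
    set θl : Theta1 := ⟨lam, ⟨hlam0.le, hlam1.le⟩⟩ with hθl
    set δ : Measure Theta1 := Measure.dirac θl with hδdef
    have hδprob : IsProbabilityMeasure δ := by rw [hδdef]; infer_instance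
    have hδmean : ∫ θ, (θ : ℝ) ∂δ = lam := by
      rw [hδdef, integral_dirac]
    have hδ : δ ∈ Fcal1 lam := ⟨hδprob, hδmean⟩
    have hIRδ := hIR δ hδ
    rw [hδdef, integral_dirac] at hIRδ
    have hIRδ' : T δ θl ≤ lam * u (Q δ θl) := by
      have : (θl : ℝ) = lam := rfl
      rw [this] at hIRδ; linarith
    have hq0 : 0 ≤ Q δ θl := hQnn δ θl
    have hmid : T δ θl - c * Q δ θl ≤ lam * u qstar - c * qstar := by
      have := hmax (Q δ θl) hq0; linarith
    calc guarantee1 lam c Q T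
        ≤ ((∫ θ, (T δ θ - c * Q δ θ) ∂δ : ℝ) : EReal) := by
          rw [guarantee1]; exact iInf₂_le δ hδ
      _ = ((T δ θl - c * Q δ θl : ℝ) : EReal) := by rw [hδdef, integral_dirac]
      _ ≤ ((lam * u qstar - c * qstar : ℝ) : EReal) := by exact_mod_cast hmid
      _ ≤ guarantee1 lam c Qs Ts := by
          rw [guarantee1]
          refine le_iInf₂ fun F hF => ?_
          haveI := hF.1
          have hconst : ∫ θ, (Ts F θ - c * Qs F θ) ∂F = lam * u qstar - c * qstar := by
            have h1 : (fun θ : Theta1 => Ts F θ - c * Qs F θ)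
                = fun _ : Theta1 => lam * u qstar - c * qstar := by
              funext θ; rw [hQs, hTs]
            rw [h1, integral_const]; simp
          rw [hconst]

end
end

section
/- Suppose K = 1. For every incentive compatible and individually rational mechanism (Q,T), the profit guarantee satisfies inf_{F ∈ 𝓕} E_F[T(F,θ) − c·Q(F,θ)] ≤ λ·u(Q(δ_λ,λ)) − c·Q(δ_λ,λ), where δ_λ ∈ 𝓕 is the Dirac distribution placing probability one on the type λ; in particular the profit guarantee is at most sup_{q ≥ 0} {λ·u(q) − c·q}. -/
open MeasureTheory Set Filter Topology

noncomputable section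

/-- For `K = 1`, every IC and IR mechanism has profit guarantee at most
`λ·u(Q(δ_λ,λ)) − c·Q(δ_λ,λ)`, where `δ_λ` is the Dirac measure at the type `λ`; in
particular the profit guarantee is at most `sup_{q ≥ 0} {λ·u(q) − c·q}`. -/
theorem stmt1
    (c lam : ℝ) (hc : 0 < c) (hlam : 0 < lam ∧ lam < 1)
    (u u' : ℝ → ℝ)
    (hu_mono : StrictMonoOn u (Set.Ici 0))
    (hu_conc : StrictConcaveOn ℝ (Set.Ici 0) u)
    (hu_nonneg : ∀ q, 0 ≤ q → 0 ≤ u q)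
    (hu_deriv : ∀ q, 0 < q → HasDerivAt u (u' q) q)
    (hu'_zero : Tendsto u' (nhdsWithin 0 (Set.Ioi 0)) atTop)
    (hu'_top : Tendsto u' atTop (nhds 0))
    (Q T : Measure Theta1 → Theta1 → ℝ)
    (hQpos : ∀ F θ, 0 ≤ Q F θ)
    (hIC : IC1 lam u Q T) (hIR : IR1 lam u Q T)
    (θlam : Theta1) (hθlam : (θlam : ℝ) = lam) :
    guarantee1 lam c Q T ≤
        ((lam * u (Q (Measure.dirac θlam) θlam) - c * Q (Measure.dirac θlam) θlam : ℝ) : EReal) ∧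
      guarantee1 lam c Q T ≤ ⨆ q : Set.Ici (0:ℝ), ((lam * u q - c * q : ℝ) : EReal) := by
  set δ := Measure.dirac θlam with hδ
  have hF : δ ∈ Fcal1 lam := by
    refine ⟨inferInstance, ?_⟩
    rw [hδ, integral_dirac, hθlam]
  have hIRδ := hIR δ hF
  rw [hδ] at hIRδ
  rw [integral_dirac] at hIRδ
  rw [← hδ] at hIRδ
  have hT : T δ θlam ≤ lam * u (Q δ θlam) := by
    rw [hθlam] at hIRδ; linarith
  have h1 : guarantee1 lam c Q T ≤
      ((lam * u (Q δ θlam) - c * Q δ θlam : ℝ) : EReal) := by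
    have hle : guarantee1 lam c Q T ≤ ((∫ θ, (T δ θ - c * Q δ θ) ∂δ : ℝ) : EReal) :=
      iInf₂_le δ hF
    have hint : (∫ θ, (T δ θ - c * Q δ θ) ∂δ : ℝ) = T δ θlam - c * Q δ θlam := by
      rw [hδ, integral_dirac]
    refine hle.trans ?_
    rw [hint]
    exact_mod_cast EReal.coe_le_coe_iff.2 (by linarith)
  refine ⟨h1, h1.trans ?_⟩
  exact le_iSup (fun q : Set.Ici (0:ℝ) => ((lam * u q - c * q : ℝ) : EReal))
    ⟨Q δ θlam, hQpos δ θlam⟩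

end
end

section
/- The constant symmetric mechanism defined by Q^{d*}_i(F,θ) = q^{d*} for every i = 1,…,K and T^{d*}(F,θ) = λ·u(q^{d*}) for all F ∈ 𝓕 and θ ∈ Θ, where q^{d*} = (u')⁻¹(cK/λ), solves the diagonal-restricted robust pricing problem: it is incentive compatible and individually rational, and for every incentive compatible and individually rational mechanism (Q,T), inf_{F^d ∈ 𝓕^d} E_{F^d}[T(F^d,θ) − c·∑_{i=1}^K Q_i(F^d,θ)] ≤ inf_{F^d ∈ 𝓕^d} E_{F^d}[T^{d*}(F^d,θ) − c·∑_{i=1}^K Q^{d*}_i(F^d,θ)] = λ·u(q^{d*}) − cK·q^{d*}. -/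
open MeasureTheory Set Filter Topology

noncomputable section

/-- The type space `Θ = [0,1]^K`. -/
abbrev Theta (K : ℕ) := Fin K → Set.Icc (0:ℝ) 1

/-- The set `𝓕` of Borel probability measures on `Θ` whose mean total demand is `lam`. -/
def Fcal (K : ℕ) (lam : ℝ) : Set (Measure (Theta K)) :=
  {F | IsProbabilityMeasure F ∧ ∫ θ, (∑ i, (θ i : ℝ)) ∂F = lam}

/-- The buyer's utility from allocation `q` and transfer `t` at type `θ`. -/
def util (K : ℕ) (u : ℝ → ℝ) (θ : Theta K) (q : Fin K → ℝ) (t : ℝ) : ℝ :=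
  ∑ i, (θ i : ℝ) * u (q i) - t

/-- Incentive compatibility of a mechanism `(Q,T)`. -/
def IC (K : ℕ) (lam : ℝ) (u : ℝ → ℝ) (Q : Measure (Theta K) → Theta K → Fin K → ℝ)
    (T : Measure (Theta K) → Theta K → ℝ) : Prop :=
  (∀ F ∈ Fcal K lam, ∀ θ θ' : Theta K,
      util K u θ (Q F θ') (T F θ') ≤ util K u θ (Q F θ) (T F θ)) ∧
  (∀ F ∈ Fcal K lam, ∀ F' ∈ Fcal K lam,
      ∫ θ, util K u θ (Q F' θ) (T F' θ) ∂F ≤ ∫ θ, util K u θ (Q F θ) (T F θ) ∂F)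

/-- Individual rationality of a mechanism `(Q,T)`. -/
def IR (K : ℕ) (lam : ℝ) (u : ℝ → ℝ) (Q : Measure (Theta K) → Theta K → Fin K → ℝ)
    (T : Measure (Theta K) → Theta K → ℝ) : Prop :=
  ∀ F ∈ Fcal K lam, 0 ≤ ∫ θ, util K u θ (Q F θ) (T F θ) ∂F

/-- The profit guarantee `inf_{F ∈ 𝓕} E_F[T(F,θ) - c·∑ᵢ Qᵢ(F,θ)]` (valued in `EReal`). -/
def guarantee (K : ℕ) (lam c : ℝ) (Q : Measure (Theta K) → Theta K → Fin K → ℝ)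
    (T : Measure (Theta K) → Theta K → ℝ) : EReal :=
  ⨅ F ∈ Fcal K lam, ((∫ θ, (T F θ - c * ∑ i, Q F θ i) ∂F : ℝ) : EReal)

/-- The diagonal `Θ^d = {(t,…,t) : t ∈ [0,1]}` of the type space. -/
def Diag (K : ℕ) : Set (Theta K) := {θ | ∃ t : Set.Icc (0:ℝ) 1, ∀ i, θ i = t}

/-- The set `𝓕^d ⊂ 𝓕` of distributions supported on the diagonal. -/
def FcalD (K : ℕ) (lam : ℝ) : Set (Measure (Theta K)) :=
  {F | F ∈ Fcal K lam ∧ F (Diag K) = 1}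

/-- The diagonal-restricted profit guarantee `inf_{F^d ∈ 𝓕^d} E_{F^d}[T − c·∑ᵢ Qᵢ]`. -/
def guaranteeD (K : ℕ) (lam c : ℝ) (Q : Measure (Theta K) → Theta K → Fin K → ℝ)
    (T : Measure (Theta K) → Theta K → ℝ) : EReal :=
  ⨅ F ∈ FcalD K lam, ((∫ θ, (T F θ - c * ∑ i, Q F θ i) ∂F : ℝ) : EReal)

/-- Tangent line lies above a concave function. -/
lemma tangent_le_aux {u : ℝ → ℝ} {d : ℝ} (hconc : ConcaveOn ℝ (Set.Ici 0) u) {x : ℝ}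
    (hx : 0 < x) (hd : HasDerivAt u d x) {y : ℝ} (hy : 0 ≤ y) :
    u y ≤ u x + d * (y - x) := by
  rcases lt_trichotomy y x with h | rfl | h
  · have hs := hconc.le_slope_of_hasDerivAt (Set.mem_Ici.2 hy) (Set.mem_Ici.2 hx.le) h hd
    rw [slope_def_field] at hs
    have hxy : 0 < x - y := by linarith
    have := (le_div_iff₀ hxy).1 hs
    nlinarith
  · simp
  · have hs := hconc.slope_le_of_hasDerivAt (Set.mem_Ici.2 hx.le) (Set.mem_Ici.2 hy) h hd
    rw [slope_def_field] at hs
    have hxy : 0 < y - x := by linarith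
    have := (div_le_iff₀ hxy).1 hs
    nlinarith

/-- The constant symmetric mechanism `Q^{d*}ᵢ(F,θ) = q^{d*}`,
`T^{d*}(F,θ) = λ·u(q^{d*})`, with `q^{d*} = (u')⁻¹(cK/λ)` (i.e. `λ·u'(q^{d*}) = cK`),
is IC and IR and solves the diagonal-restricted robust pricing problem, with value
`λ·u(q^{d*}) − cK·q^{d*}`. -/
theorem stmt8
    (K : ℕ) (hK : 1 ≤ K) (c lam : ℝ) (hc : 0 < c) (hlam : 0 < lam ∧ lam < K)
    (u u' : ℝ → ℝ)
    (hu_mono : StrictMonoOn u (Set.Ici 0))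
    (hu_conc : StrictConcaveOn ℝ (Set.Ici 0) u)
    (hu_nonneg : ∀ x, 0 ≤ x → 0 ≤ u x)
    (hu_deriv : ∀ x, 0 < x → HasDerivAt u (u' x) x)
    (hu'_zero : Tendsto u' (nhdsWithin 0 (Set.Ioi 0)) atTop)
    (hu'_top : Tendsto u' atTop (nhds 0))
    (qd : ℝ) (hqd_pos : 0 < qd) (hqd : lam * u' qd = c * K)
    (Qs : Measure (Theta K) → Theta K → Fin K → ℝ) (Ts : Measure (Theta K) → Theta K → ℝ)
    (hQs : ∀ F θ i, Qs F θ i = qd) (hTs : ∀ F θ, Ts F θ = lam * u qd) :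
    IC K lam u Qs Ts ∧ IR K lam u Qs Ts ∧
      (∀ Q T, (∀ F θ i, 0 ≤ Q F θ i) → IC K lam u Q T → IR K lam u Q T →
        guaranteeD K lam c Q T ≤ guaranteeD K lam c Qs Ts) ∧
      guaranteeD K lam c Qs Ts = ((lam * u qd - c * K * qd : ℝ) : EReal) := by
  obtain ⟨hlam0, hlamK⟩ := hlam
  have hKpos : (0:ℝ) < K := by exact_mod_cast Nat.pos_of_ne_zero (by omega)
  set t0 : ℝ := lam / K with ht0def
  have ht0pos : 0 < t0 := div_pos hlam0 hKpos
  have ht0le : t0 ≤ 1 := by rw [ht0def, div_le_one hKpos]; exact hlamK.le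
  have htc : t0 * u' qd = c := by
    rw [ht0def, div_mul_eq_mul_div, div_eq_iff hKpos.ne']
    linarith [hqd]
  have hkey : ∀ q : ℝ, 0 ≤ q → t0 * u q - c * q ≤ t0 * u qd - c * qd := by
    intro q hq
    have := tangent_le_aux hu_conc.concaveOn hqd_pos (hu_deriv qd hqd_pos) hq
    nlinarith
  have ht0mem : t0 ∈ Set.Icc (0:ℝ) 1 := ⟨ht0pos.le, ht0le⟩
  set θ0 : Theta K := fun _ => ⟨t0, ht0mem⟩ with hθ0def
  have hsum0 : (∑ i, ((θ0 i : ℝ))) = lam := by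
    simp only [hθ0def, Finset.sum_const, Finset.card_univ, Fintype.card_fin, nsmul_eq_mul]
    rw [ht0def]; field_simp
  have hF0F : Measure.dirac θ0 ∈ Fcal K lam := by
    refine ⟨by infer_instance, ?_⟩
    rw [integral_dirac, hsum0]
  have hF0D : Measure.dirac θ0 ∈ FcalD K lam := by
    refine ⟨hF0F, ?_⟩
    exact Measure.dirac_apply_of_mem ⟨⟨t0, ht0mem⟩, fun i => rfl⟩
  have hval : ∀ F ∈ FcalD K lam,
      (∫ θ, (Ts F θ - c * ∑ i, Qs F θ i) ∂F : ℝ) = lam * u qd - c * K * qd := by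
    intro F hF
    haveI : IsProbabilityMeasure F := hF.1.1
    have : (fun θ : Theta K => Ts F θ - c * ∑ i, Qs F θ i)
        = fun _ => lam * u qd - c * K * qd := by
      funext θ
      simp only [hQs, hTs, Finset.sum_const, Finset.card_univ, Fintype.card_fin, nsmul_eq_mul]
      ring
    rw [this, integral_const]
    simp
  have hGs : guaranteeD K lam c Qs Ts = ((lam * u qd - c * K * qd : ℝ) : EReal) := by
    apply le_antisymm
    · calc guaranteeD K lam c Qs Ts
          ≤ ((∫ θ, (Ts (Measure.dirac θ0) θ - c * ∑ i, Qs (Measure.dirac θ0) θ i)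
              ∂(Measure.dirac θ0) : ℝ) : EReal) := iInf₂_le _ hF0D
        _ = _ := by rw [hval _ hF0D]
    · refine le_iInf₂ fun F hF => ?_
      rw [hval F hF]
  refine ⟨⟨?_, ?_⟩, ?_, ?_, hGs⟩
  · intro F _ θ θ'
    simp only [util, hQs, hTs, le_refl]
  · intro F hF F' hF'
    have : ∀ θ : Theta K, util K u θ (Qs F' θ) (Ts F' θ) = util K u θ (Qs F θ) (Ts F θ) := by
      intro θ; simp only [util, hQs, hTs]
    simp only [this, le_refl]
  · -- IR of (Qs, Ts)
    intro F hF
    haveI : IsProbabilityMeasure F := hF.1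
    have h2 := hF.2
    have hgint : Integrable (fun θ : Theta K => ∑ i, ((θ i : ℝ))) F := by
      by_contra h
      rw [integral_undef h] at h2
      exact hlam0.ne' h2.symm
    have heq : (fun θ : Theta K => util K u θ (Qs F θ) (Ts F θ))
        = fun θ : Theta K => (∑ i, ((θ i : ℝ))) * u qd - lam * u qd := by
      funext θ
      simp only [util, hQs, hTs, Finset.sum_mul]
    rw [heq, integral_sub (hgint.mul_const _) (integrable_const _),
      integral_mul_const, h2, integral_const]
    simp
  · -- optimality
    intro Q T hQnn hIC hIR
    rw [hGs]
    calc guaranteeD K lam c Q T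
        ≤ ((∫ θ, (T (Measure.dirac θ0) θ - c * ∑ i, Q (Measure.dirac θ0) θ i)
            ∂(Measure.dirac θ0) : ℝ) : EReal) := iInf₂_le _ hF0D
      _ ≤ ((lam * u qd - c * K * qd : ℝ) : EReal) := by
          rw [EReal.coe_le_coe_iff, integral_dirac]
          have hIR0 := hIR (Measure.dirac θ0) hF0F
          rw [integral_dirac] at hIR0
          simp only [util] at hIR0
          have hθ0i : ∀ i : Fin K, ((θ0 i : ℝ)) = t0 := fun i => rfl
          have hT : T (Measure.dirac θ0) θ0 ≤ ∑ i, t0 * u (Q (Measure.dirac θ0) θ0 i) := by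
            have he : (∑ i, ((θ0 i : ℝ)) * u (Q (Measure.dirac θ0) θ0 i))
                = ∑ i, t0 * u (Q (Measure.dirac θ0) θ0 i) :=
              Finset.sum_congr rfl fun i _ => by rw [hθ0i i]
            rw [he] at hIR0
            linarith
          have hsum : (∑ i, t0 * u (Q (Measure.dirac θ0) θ0 i))
              - c * ∑ i, Q (Measure.dirac θ0) θ0 i ≤ lam * u qd - c * K * qd := by
            rw [Finset.mul_sum, ← Finset.sum_sub_distrib]
            calc (∑ i, (t0 * u (Q (Measure.dirac θ0) θ0 i) - c * Q (Measure.dirac θ0) θ0 i))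
                ≤ ∑ _i : Fin K, (t0 * u qd - c * qd) :=
                  Finset.sum_le_sum fun i _ => hkey _ (hQnn _ θ0 i)
              _ = K * (t0 * u qd - c * qd) := by
                  simp [Finset.sum_const, Finset.card_univ, nsmul_eq_mul]; ring
              _ = lam * u qd - c * K * qd := by
                  have hKt : (K:ℝ) * t0 = lam := by rw [ht0def]; field_simp
                  linear_combination u qd * hKt
          linarith

end
end

section
/- For every incentive compatible and individually rational mechanism (Q,T), the profit guarantee is bounded above by the full-surplus benchmark at the optimal symmetric quantity: inf_{F ∈ 𝓕} E_F[T(F,θ) − c·∑_{i=1}^K Q_i(F,θ)] ≤ λ·u(q*) − cK·q*, where q* = (u')⁻¹(cK/λ). -/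
open MeasureTheory Set Filter Topology

noncomputable section

lemma tangent_line {u u' : ℝ → ℝ} (hconc : ConcaveOn ℝ (Set.Ici 0) u) {a : ℝ} (ha : 0 < a)
    (hd : HasDerivAt u (u' a) a) {q : ℝ} (hq : 0 ≤ q) : u q ≤ u a + u' a * (q - a) := by
  have hcv : ConvexOn ℝ (Set.Ici 0) (-u) := hconc.neg
  rcases lt_trichotomy q a with h | h | h
  · have := hcv.slope_le_of_hasDerivAt hq (le_of_lt ha) h hd.neg
    rw [slope_def_field] at this
    simp only [Pi.neg_apply] at this
    have hden : 0 < a - q := by linarith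
    rw [div_le_iff₀ hden] at this
    nlinarith
  · simp [h]
  · have := hcv.le_slope_of_hasDerivAt (le_of_lt ha) (le_of_lt (lt_trans ha h)) h hd.neg
    rw [slope_def_field] at this
    simp only [Pi.neg_apply] at this
    have hden : 0 < q - a := by linarith
    rw [le_div_iff₀ hden] at this
    nlinarith

/-- Every IC and IR mechanism has profit guarantee at most the
full-surplus benchmark `λ·u(q*) − cK·q*` at the optimal symmetric quantity
`q* = (u')⁻¹(cK/λ)` (i.e. `λ·u'(q*) = cK`). -/
theorem stmt9
    (K : ℕ) (hK : 1 ≤ K) (c lam : ℝ) (hc : 0 < c) (hlam : 0 < lam ∧ lam < K)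
    (u u' : ℝ → ℝ)
    (hu_mono : StrictMonoOn u (Set.Ici 0))
    (hu_conc : StrictConcaveOn ℝ (Set.Ici 0) u)
    (hu_nonneg : ∀ x, 0 ≤ x → 0 ≤ u x)
    (hu_deriv : ∀ x, 0 < x → HasDerivAt u (u' x) x)
    (hu'_zero : Tendsto u' (nhdsWithin 0 (Set.Ioi 0)) atTop)
    (hu'_top : Tendsto u' atTop (nhds 0))
    (qstar : ℝ) (hqs_pos : 0 < qstar) (hqs : lam * u' qstar = c * K)
    (Q : Measure (Theta K) → Theta K → Fin K → ℝ) (T : Measure (Theta K) → Theta K → ℝ)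
    (hQpos : ∀ F θ i, 0 ≤ Q F θ i)
    (hIC : IC K lam u Q T) (hIR : IR K lam u Q T) :
    guarantee K lam c Q T ≤ ((lam * u qstar - c * K * qstar : ℝ) : EReal) := by
  obtain ⟨hlam0, hlamK⟩ := hlam
  have h0K : (0:ℝ) < K := by exact_mod_cast Nat.lt_of_lt_of_le Nat.zero_lt_one hK
  set t0 : ℝ := lam / K with ht0def
  have ht0pos : 0 < t0 := div_pos hlam0 h0K
  have ht0le : t0 ≤ 1 := by
    rw [ht0def, div_le_one h0K]; exact le_of_lt hlamK
  set θ0 : Theta K := fun _ => ⟨t0, le_of_lt ht0pos, ht0le⟩ with hθ0def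
  set F : Measure (Theta K) := Measure.dirac θ0 with hFdef
  have hF : F ∈ Fcal K lam := by
    refine ⟨by rw [hFdef]; infer_instance, ?_⟩
    rw [hFdef, integral_dirac]
    show (∑ _i : Fin K, t0) = lam
    rw [Finset.sum_const, Finset.card_univ, Fintype.card_fin, nsmul_eq_mul, ht0def]
    field_simp
  have hle : guarantee K lam c Q T ≤
      ((∫ θ, (T F θ - c * ∑ i, Q F θ i) ∂F : ℝ) : EReal) := by
    exact iInf₂_le F hF
  refine le_trans hle ?_
  rw [EReal.coe_le_coe_iff]
  rw [hFdef, integral_dirac]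
  -- IR at the dirac measure
  have hIR' := hIR F hF
  rw [hFdef, integral_dirac] at hIR'
  have hT : T F θ0 ≤ ∑ i, (θ0 i : ℝ) * u (Q F θ0 i) := by
    have : util K u θ0 (Q F θ0) (T F θ0) = ∑ i, (θ0 i : ℝ) * u (Q F θ0 i) - T F θ0 := rfl
    rw [this] at hIR'
    linarith
  -- derivative value
  have hu'qs : u' qstar = c * K / lam := by
    field_simp at hqs ⊢; linarith
  have hterm : ∀ i : Fin K, t0 * u (Q F θ0 i) - c * Q F θ0 i ≤ t0 * u qstar - c * qstar := by
    intro i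
    have htan := tangent_line hu_conc.concaveOn hqs_pos (hu_deriv qstar hqs_pos)
      (hQpos F θ0 i)
    have ht0u' : t0 * u' qstar = c := by
      rw [ht0def, hu'qs]; field_simp
    nlinarith [hQpos F θ0 i, mul_le_mul_of_nonneg_left htan (le_of_lt ht0pos)]
  calc T F θ0 - c * ∑ i, Q F θ0 i
      ≤ (∑ i, (θ0 i : ℝ) * u (Q F θ0 i)) - c * ∑ i, Q F θ0 i := by linarith
    _ = ∑ i, (t0 * u (Q F θ0 i) - c * Q F θ0 i) := by
        rw [Finset.sum_sub_distrib, Finset.mul_sum]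
    _ ≤ ∑ _i : Fin K, (t0 * u qstar - c * qstar) :=
        Finset.sum_le_sum (fun i _ => hterm i)
    _ = K * (t0 * u qstar - c * qstar) := by
        rw [Finset.sum_const, Finset.card_univ, Fintype.card_fin, nsmul_eq_mul]
    _ = lam * u qstar - c * K * qstar := by
        rw [ht0def]; field_simp


end
end

section
/- The constant mechanism defined by Q*_i(F,θ) = q* for every i = 1,…,K and T*(F,θ) = λ·u(q*) for all F ∈ 𝓕 and θ ∈ Θ, where q* = (u')⁻¹(cK/λ), is robustly optimal: it is incentive compatible and individually rational, and for every incentive compatible and individually rational mechanism (Q,T), inf_{F ∈ 𝓕} E_F[T(F,θ) − c·∑_{i=1}^K Q_i(F,θ)] ≤ inf_{F ∈ 𝓕} E_F[T*(F,θ) − c·∑_{i=1}^K Q*_i(F,θ)] = λ·u(q*) − cK·q*. -/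
open MeasureTheory Set Filter Topology

noncomputable section

/-- The constant mechanism `Q*ᵢ(F,θ) = q*`, `T*(F,θ) = λ·u(q*)`,
with `q* = (u')⁻¹(cK/λ)` (i.e. `λ·u'(q*) = cK`), is IC, IR and robustly optimal, and
its profit guarantee equals `λ·u(q*) − cK·q*`. -/
theorem stmt10
    (K : ℕ) (hK : 1 ≤ K) (c lam : ℝ) (hc : 0 < c) (hlam : 0 < lam ∧ lam < K)
    (u u' : ℝ → ℝ)
    (hu_mono : StrictMonoOn u (Set.Ici 0))
    (hu_conc : StrictConcaveOn ℝ (Set.Ici 0) u)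
    (hu_nonneg : ∀ x, 0 ≤ x → 0 ≤ u x)
    (hu_deriv : ∀ x, 0 < x → HasDerivAt u (u' x) x)
    (hu'_zero : Tendsto u' (nhdsWithin 0 (Set.Ioi 0)) atTop)
    (hu'_top : Tendsto u' atTop (nhds 0))
    (qstar : ℝ) (hqs_pos : 0 < qstar) (hqs : lam * u' qstar = c * K)
    (Qs : Measure (Theta K) → Theta K → Fin K → ℝ) (Ts : Measure (Theta K) → Theta K → ℝ)
    (hQs : ∀ F θ i, Qs F θ i = qstar) (hTs : ∀ F θ, Ts F θ = lam * u qstar) :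
    IC K lam u Qs Ts ∧ IR K lam u Qs Ts ∧
      (∀ Q T, (∀ F θ i, 0 ≤ Q F θ i) → IC K lam u Q T → IR K lam u Q T →
        guarantee K lam c Q T ≤ guarantee K lam c Qs Ts) ∧
      guarantee K lam c Qs Ts = ((lam * u qstar - c * K * qstar : ℝ) : EReal) := by
  obtain ⟨hlam0, hlamK⟩ := hlam
  have hK0 : (0:ℝ) < K := by exact_mod_cast Nat.lt_of_lt_of_le Nat.zero_lt_one hK
  -- derivative identity
  have hd : lam / K * u' qstar = c := by
    field_simp
    linarith [hqs]
  -- tangent line bound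
  have tangent : ∀ q, 0 ≤ q → u q ≤ u qstar + u' qstar * (q - qstar) := by
    intro q hq
    rcases lt_trichotomy q qstar with h | h | h
    · have hs := hu_conc.concaveOn.le_slope_of_hasDerivAt (mem_Ici.2 hq)
        (mem_Ici.2 hqs_pos.le) h (hu_deriv qstar hqs_pos)
      rw [slope_def_field] at hs
      have hpos : (0:ℝ) < qstar - q := by linarith
      have := (le_div_iff₀ hpos).mp hs
      nlinarith
    · simp [h]
    · have hs := hu_conc.concaveOn.slope_le_of_hasDerivAt (mem_Ici.2 hqs_pos.le)
        (mem_Ici.2 hq) h (hu_deriv qstar hqs_pos)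
      rw [slope_def_field] at hs
      have hpos : (0:ℝ) < q - qstar := by linarith
      have := (div_le_iff₀ hpos).mp hs
      nlinarith
  -- q* maximizes (lam/K)·u(q) − c·q over q ≥ 0
  have gmax : ∀ q, 0 ≤ q → lam / K * u q - c * q ≤ lam / K * u qstar - c * qstar := by
    intro q hq
    have key : lam / K * u q ≤ lam / K * u qstar + c * (q - qstar) := by
      calc lam / K * u q ≤ lam / K * (u qstar + u' qstar * (q - qstar)) :=
            mul_le_mul_of_nonneg_left (tangent q hq) (by positivity)
        _ = lam / K * u qstar + (lam / K * u' qstar) * (q - qstar) := by ring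
        _ = lam / K * u qstar + c * (q - qstar) := by rw [hd]
    linarith
  -- the worst-case distribution: Dirac at the symmetric mean type
  have h01 : lam / K ∈ Set.Icc (0:ℝ) 1 :=
    ⟨by positivity, (div_le_one hK0).mpr hlamK.le⟩
  set θ0 : Theta K := fun _ => ⟨lam / K, h01⟩ with hθ0
  set F0 : Measure (Theta K) := Measure.dirac θ0 with hF0def
  have hF0 : F0 ∈ Fcal K lam := by
    refine ⟨inferInstance, ?_⟩
    rw [hF0def, integral_dirac]
    simp [hθ0, Finset.sum_const, Finset.card_univ]
    field_simp
  -- value of the constant mechanism at any F in Fcal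
  have hval : ∀ F ∈ Fcal K lam,
      (∫ θ, (Ts F θ - c * ∑ i, Qs F θ i) ∂F) = lam * u qstar - c * K * qstar := by
    intro F hF
    haveI := hF.1
    simp only [hTs, hQs, Finset.sum_const, Finset.card_univ, Fintype.card_fin, nsmul_eq_mul]
    rw [integral_const]
    simp only [probReal_univ, measure_univ, ENNReal.toReal_one, one_smul]
    ring
  have hg : guarantee K lam c Qs Ts = ((lam * u qstar - c * K * qstar : ℝ) : EReal) := by
    apply le_antisymm
    · exact iInf₂_le_of_le F0 hF0 (by rw [hval F0 hF0])
    · exact le_iInf₂ fun F hF => le_of_eq (by rw [hval F hF])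
  refine ⟨⟨?_, ?_⟩, ?_, ?_, hg⟩
  · intro F hF θ θ'
    simp [util, hQs, hTs]
  · intro F hF F' hF'
    simp only [util, hQs, hTs]
    exact le_rfl
  · intro F hF
    haveI := hF.1
    have hint : Integrable (fun θ : Theta K => ∑ i, (θ i : ℝ)) F := by
      apply Continuous.integrable_of_hasCompactSupport
      · exact continuous_finset_sum _ fun i _ => continuous_subtype_val.comp (continuous_apply i)
      · exact HasCompactSupport.of_compactSpace _
    simp only [util, hQs, hTs]
    have heq : (fun θ : Theta K => ∑ i, (θ i : ℝ) * u qstar - lam * u qstar)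
        = fun θ : Theta K => (∑ i, (θ i : ℝ)) * u qstar - lam * u qstar := by
      funext θ
      rw [Finset.sum_mul]
    rw [heq, integral_sub (hint.mul_const _) (integrable_const _), integral_mul_const, hF.2,
      integral_const]
    simp [mul_comm]
  · intro Q T hQpos hICQT hIRQT
    have hIR0 := hIRQT F0 hF0
    rw [hF0def, integral_dirac] at hIR0
    have hIR0' : 0 ≤ ∑ i : Fin K, lam / K * u (Q F0 θ0 i) - T F0 θ0 := hIR0
    have hbound : T F0 θ0 - c * ∑ i, Q F0 θ0 i ≤ lam * u qstar - c * K * qstar := by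
      have h2 : ∑ i : Fin K, (lam / K * u (Q F0 θ0 i) - c * Q F0 θ0 i)
          ≤ ∑ _i : Fin K, (lam / K * u qstar - c * qstar) :=
        Finset.sum_le_sum fun i _ => gmax _ (hQpos F0 θ0 i)
      rw [← Finset.mul_sum] at hIR0'
      rw [Finset.sum_sub_distrib, Finset.sum_const, Finset.card_univ, Fintype.card_fin,
        nsmul_eq_mul, ← Finset.mul_sum, ← Finset.mul_sum] at h2
      have h3 : (K : ℝ) * (lam / K * u qstar - c * qstar) = lam * u qstar - c * K * qstar := by
        field_simp
      linarith
    calc guarantee K lam c Q T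
        ≤ ((∫ θ, (T F0 θ - c * ∑ i, Q F0 θ i) ∂F0 : ℝ) : EReal) := iInf₂_le F0 hF0
      _ = ((T F0 θ0 - c * ∑ i, Q F0 θ0 i : ℝ) : EReal) := by rw [hF0def, integral_dirac]
      _ ≤ ((lam * u qstar - c * K * qstar : ℝ) : EReal) := EReal.coe_le_coe_iff.2 hbound
      _ = guarantee K lam c Qs Ts := hg.symm

end
end

section
/- The committed spend mechanism (Q^{b*}, T^{b*}) with parameters q̄* = K·(u')⁻¹(cK/λ), t̄* = λ·u(q̄*/K) and price p* = c is robustly optimal: it is incentive compatible and individually rational, and for every incentive compatible and individually rational mechanism (Q,T), inf_{F ∈ 𝓕} E_F[T(F,θ) − c·∑_{i=1}^K Q_i(F,θ)] ≤ inf_{F ∈ 𝓕} E_F[T^{b*}(F,θ) − c·∑_{i=1}^K Q^{b*}_i(F,θ)]. -/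
open MeasureTheory Set Filter Topology

noncomputable section

/-- The feasible set of the committed spend problem: nonnegative quantity vectors whose
total is at least the committed quantity `qbar`. -/
def feasible (K : ℕ) (qbar : ℝ) : Set (Fin K → ℝ) :=
  {q | (∀ i, 0 ≤ q i) ∧ qbar ≤ ∑ i, q i}

/-- The buyer's objective in the committed spend mechanism:
`∑ᵢ θᵢ·u(qᵢ) − t̄ − p·(∑ᵢ qᵢ − q̄)`. -/
def csObj (K : ℕ) (u : ℝ → ℝ) (θ : Theta K) (qbar tbar p : ℝ) (q : Fin K → ℝ) : ℝ :=
  ∑ i, (θ i : ℝ) * u (q i) - tbar - p * (∑ i, q i - qbar)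

/-- Tangent line inequality for a concave function. -/
lemma tangent_line_le {u u' : ℝ → ℝ} (hu_conc : ConcaveOn ℝ (Set.Ici 0) u)
    {x : ℝ} (hx : 0 < x) (hd : HasDerivAt u (u' x) x) {y : ℝ} (hy : 0 ≤ y) :
    u y ≤ u x + u' x * (y - x) := by
  rcases lt_trichotomy y x with h | h | h
  · have hs := hu_conc.le_slope_of_hasDerivAt (mem_Ici.2 hy) (mem_Ici.2 hx.le) h hd
    rw [slope_def_field] at hs
    have hxy : (0:ℝ) < x - y := by linarith
    have := (le_div_iff₀ hxy).1 hs
    nlinarith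
  · subst h; simp
  · have hs := hu_conc.slope_le_of_hasDerivAt (mem_Ici.2 hx.le) (mem_Ici.2 hy) h hd
    rw [slope_def_field] at hs
    have hxy : (0:ℝ) < y - x := by linarith
    have := (div_le_iff₀ hxy).1 hs
    nlinarith

/-- The committed spend mechanism `(Q^{b*},T^{b*})` with parameters
`q̄* = K·(u')⁻¹(cK/λ)`, `t̄* = λ·u(q̄*/K)` and price `p* = c`—where `Q^{b*}(F,θ)` is a
maximizer of the committed spend objective and
`T^{b*}(F,θ) = t̄* + c·(∑ᵢ Q^{b*}ᵢ(F,θ) − q̄*)`—is IC, IR and robustly optimal. -/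
theorem stmt13
    (K : ℕ) (hK : 1 ≤ K) (c lam : ℝ) (hc : 0 < c) (hlam : 0 < lam ∧ lam < K)
    (u u' : ℝ → ℝ)
    (hu_mono : StrictMonoOn u (Set.Ici 0))
    (hu_conc : StrictConcaveOn ℝ (Set.Ici 0) u)
    (hu_nonneg : ∀ x, 0 ≤ x → 0 ≤ u x)
    (hu_deriv : ∀ x, 0 < x → HasDerivAt u (u' x) x)
    (hu'_zero : Tendsto u' (nhdsWithin 0 (Set.Ioi 0)) atTop)
    (hu'_top : Tendsto u' atTop (nhds 0))
    (qstar : ℝ) (hqs_pos : 0 < qstar) (hqs : lam * u' qstar = c * K)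
    (qbar tbar : ℝ) (hqbar : qbar = K * qstar) (htbar : tbar = lam * u (qbar / K))
    (Qb : Measure (Theta K) → Theta K → Fin K → ℝ) (Tb : Measure (Theta K) → Theta K → ℝ)
    (hQb : ∀ F θ, Qb F θ ∈ feasible K qbar ∧
      ∀ q ∈ feasible K qbar, csObj K u θ qbar tbar c q ≤ csObj K u θ qbar tbar c (Qb F θ))
    (hTb : ∀ F θ, Tb F θ = tbar + c * (∑ i, Qb F θ i - qbar)) :
    IC K lam u Qb Tb ∧ IR K lam u Qb Tb ∧
      ∀ Q T, (∀ F θ i, 0 ≤ Q F θ i) → IC K lam u Q T → IR K lam u Q T →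
        guarantee K lam c Q T ≤ guarantee K lam c Qb Tb := by
  have hKpos : (0:ℝ) < K := by exact_mod_cast Nat.lt_of_lt_of_le Nat.zero_lt_one hK
  have hKne : (K:ℝ) ≠ 0 := ne_of_gt hKpos
  have hqK : qbar / K = qstar := by rw [hqbar]; field_simp
  have htbar' : tbar = lam * u qstar := by rw [htbar, hqK]
  have hfeas_star : (fun _ : Fin K => qstar) ∈ feasible K qbar := by
    refine ⟨fun i => hqs_pos.le, ?_⟩
    simp [Finset.sum_const, Finset.card_univ, nsmul_eq_mul, hqbar]
  -- bridge between util and csObj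
  have hub2 : ∀ F θ θ', util K u θ (Qb F θ') (Tb F θ') = csObj K u θ qbar tbar c (Qb F θ') := by
    intro F θ θ'
    unfold util csObj
    rw [hTb]; ring
  -- the key pointwise inequality
  have key : ∀ q : ℝ, 0 ≤ q → lam / K * u q - c * q ≤ lam / K * u qstar - c * qstar := by
    intro q hq
    have ht := tangent_line_le hu_conc.concaveOn hqs_pos (hu_deriv qstar hqs_pos) hq
    have A : lam * u q ≤ lam * u qstar + lam * u' qstar * (q - qstar) := by
      nlinarith [mul_le_mul_of_nonneg_left ht hlam.1.le]
    rw [hqs] at A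
    have goalK : lam * u q - c * K * q ≤ lam * u qstar - c * K * qstar := by linarith
    have e1 : lam / K * u q - c * q = (lam * u q - c * K * q) / K := by field_simp
    have e2 : lam / K * u qstar - c * qstar = (lam * u qstar - c * K * qstar) / K := by
      field_simp
    rw [e1, e2]
    exact (div_le_div_iff_of_pos_right hKpos).2 goalK
  -- IC
  have hIC : IC K lam u Qb Tb := by
    constructor
    · intro F hF θ θ'
      rw [hub2 F θ θ', hub2 F θ θ]
      exact (hQb F θ).2 _ (hQb F θ').1
    · intro F hF F' hF'
      refine le_of_eq (integral_congr_ae (ae_of_all _ fun θ => ?_))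
      show util K u θ (Qb F' θ) (Tb F' θ) = util K u θ (Qb F θ) (Tb F θ)
      rw [hub2 F' θ θ, hub2 F θ θ]
      exact le_antisymm ((hQb F θ).2 _ (hQb F' θ).1) ((hQb F' θ).2 _ (hQb F θ).1)
  -- integrability of total demand
  have hmeas : Measurable (fun θ : Theta K => (∑ i, (θ i : ℝ))) := by
    apply Finset.measurable_sum
    intro i _
    exact measurable_subtype_coe.comp (measurable_pi_apply i)
  have hint : ∀ F ∈ Fcal K lam, Integrable (fun θ : Theta K => (∑ i, (θ i : ℝ))) F := by
    intro F hF
    haveI := hF.1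
    refine (integrable_const (K:ℝ)).mono' hmeas.aestronglyMeasurable (ae_of_all _ fun θ => ?_)
    have h1 : |∑ i, (θ i : ℝ)| ≤ ∑ i, |(θ i : ℝ)| := Finset.abs_sum_le_sum_abs _ _
    have h2 : ∑ i, |(θ i : ℝ)| ≤ ∑ _i : Fin K, (1:ℝ) := by
      refine Finset.sum_le_sum fun i _ => ?_
      rw [abs_of_nonneg (θ i).2.1]
      exact (θ i).2.2
    simp only [Real.norm_eq_abs]
    calc |∑ i, (θ i : ℝ)| ≤ ∑ _i : Fin K, (1:ℝ) := le_trans h1 h2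
      _ = K := by simp
  -- IR
  have hIR : IR K lam u Qb Tb := by
    intro F hF
    haveI := hF.1
    have hg_lb : ∀ θ : Theta K, (∑ i, (θ i : ℝ)) * u qstar - tbar ≤
        util K u θ (Qb F θ) (Tb F θ) := by
      intro θ
      rw [hub2 F θ θ]
      refine le_trans ?_ ((hQb F θ).2 _ hfeas_star)
      unfold csObj
      have hsum : ∑ _i : Fin K, qstar = qbar := by
        simp [Finset.sum_const, Finset.card_univ, nsmul_eq_mul, hqbar]
      rw [hsum, ← Finset.sum_mul]
      ring_nf
      exact le_refl _
    have hlb_int : Integrable (fun θ : Theta K => (∑ i, (θ i : ℝ)) * u qstar - tbar) F :=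
      ((hint F hF).mul_const _).sub (integrable_const _)
    have h0 : ∫ θ, ((∑ i, (θ i : ℝ)) * u qstar - tbar) ∂F = 0 := by
      rw [integral_sub ((hint F hF).mul_const _) (integrable_const _),
        integral_mul_const, hF.2, integral_const]
      simp [htbar']
    by_cases hg : Integrable (fun θ => util K u θ (Qb F θ) (Tb F θ)) F
    · calc (0:ℝ) = ∫ θ, ((∑ i, (θ i : ℝ)) * u qstar - tbar) ∂F := h0.symm
        _ ≤ ∫ θ, util K u θ (Qb F θ) (Tb F θ) ∂F := integral_mono hlb_int hg hg_lb
    · rw [integral_undef hg]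
  refine ⟨hIC, hIR, ?_⟩
  -- optimality
  intro Q T hQpos hICQ hIRQ
  have hmem : lam / K ∈ Set.Icc (0:ℝ) 1 :=
    ⟨div_nonneg hlam.1.le hKpos.le, (div_le_one hKpos).2 hlam.2.le⟩
  set θbar : Theta K := fun _ => ⟨lam / K, hmem⟩ with hθbar
  set F₀ : Measure (Theta K) := Measure.dirac θbar with hF₀def
  have hF₀ : F₀ ∈ Fcal K lam := by
    refine ⟨Measure.dirac.isProbabilityMeasure, ?_⟩
    rw [hF₀def, integral_dirac]
    simp only [hθbar, Finset.sum_const, Finset.card_univ, Fintype.card_fin, nsmul_eq_mul]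
    field_simp
  have hconst : ∀ F ∈ Fcal K lam,
      (∫ θ, (Tb F θ - c * ∑ i, Qb F θ i) ∂F : ℝ) = tbar - c * qbar := by
    intro F hF
    haveI := hF.1
    have heq : ∀ θ : Theta K, Tb F θ - c * ∑ i, Qb F θ i = tbar - c * qbar := by
      intro θ; rw [hTb]; ring
    rw [integral_congr_ae (ae_of_all _ heq), integral_const]
    simp
  have hval : guarantee K lam c Qb Tb = ((tbar - c * qbar : ℝ) : EReal) := by
    unfold guarantee
    apply le_antisymm
    · refine iInf₂_le_of_le F₀ hF₀ ?_
      rw [hconst F₀ hF₀]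
    · exact le_iInf₂ fun F hF => by rw [hconst F hF]
  have hbound : (∫ θ, (T F₀ θ - c * ∑ i, Q F₀ θ i) ∂F₀ : ℝ) ≤ tbar - c * qbar := by
    rw [hF₀def, integral_dirac]
    have hIR0 := hIRQ F₀ hF₀
    rw [hF₀def, integral_dirac] at hIR0
    unfold util at hIR0
    have hθc : ∀ i : Fin K, ((θbar i : ℝ)) = lam / K := fun i => rfl
    simp only [hθc] at hIR0
    have hT : T F₀ θbar ≤ ∑ i, lam / K * u (Q F₀ θbar i) := by linarith
    have hterm : ∑ i, (lam / K * u (Q F₀ θbar i) - c * Q F₀ θbar i) ≤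
        ∑ _i : Fin K, (lam / K * u qstar - c * qstar) :=
      Finset.sum_le_sum fun i _ => key _ (hQpos F₀ θbar i)
    have hsplit : ∑ i, (lam / K * u (Q F₀ θbar i) - c * Q F₀ θbar i) =
        (∑ i, lam / K * u (Q F₀ θbar i)) - c * ∑ i, Q F₀ θbar i := by
      rw [Finset.sum_sub_distrib, Finset.mul_sum]
    have hrhs : ∑ _i : Fin K, (lam / K * u qstar - c * qstar) = tbar - c * qbar := by
      rw [Finset.sum_const, Finset.card_univ, Fintype.card_fin, nsmul_eq_mul, htbar', hqbar]
      field_simp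
    linarith [hterm, hsplit.symm.le]
  calc guarantee K lam c Q T
      ≤ ((∫ θ, (T F₀ θ - c * ∑ i, Q F₀ θ i) ∂F₀ : ℝ) : EReal) := iInf₂_le F₀ hF₀
    _ ≤ ((tbar - c * qbar : ℝ) : EReal) := by exact_mod_cast hbound
    _ = guarantee K lam c Qb Tb := hval.symm

end
end

section
/- Under the committed spend mechanism with price equal to marginal cost (p = c) and committed quantity q̄ ≥ 0, whenever the buyer's chosen total consumption strictly exceeds the commitment—i.e., the maximizer q^b of ∑_{i=1}^K θ_i·u(q_i) − t̄ − c·(∑_{i=1}^K q_i − q̄) subject to ∑_{i=1}^K q_i ≥ q̄ satisfies ∑_{i=1}^K q^b_i > q̄—the allocation q^b is socially efficient: it maximizes ∑_{i=1}^K θ_i·u(q_i) − c·∑_{i=1}^K q_i over all q ∈ ℝ₊^K (without the constraint ∑_i q_i ≥ q̄). -/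
open Set Filter Topology

noncomputable section

/-- In a committed spend mechanism with price `p = c` equal to
marginal cost, whenever the buyer's chosen total consumption strictly exceeds the
commitment `q̄`, the chosen allocation is socially efficient: it maximizes
`∑ᵢ θᵢ·u(qᵢ) − c·∑ᵢ qᵢ` over all nonnegative `q`, without the constraint. -/
theorem stmt14
    (K : ℕ) (hK : 1 ≤ K) (c : ℝ) (hc : 0 < c)
    (u u' : ℝ → ℝ)
    (hu_mono : StrictMonoOn u (Set.Ici 0))
    (hu_conc : StrictConcaveOn ℝ (Set.Ici 0) u)
    (hu_nonneg : ∀ x, 0 ≤ x → 0 ≤ u x)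
    (hu_deriv : ∀ x, 0 < x → HasDerivAt u (u' x) x)
    (hu'_zero : Tendsto u' (nhdsWithin 0 (Set.Ioi 0)) atTop)
    (hu'_top : Tendsto u' atTop (nhds 0))
    (θ : Theta K) (qbar tbar : ℝ) (hqbar : 0 ≤ qbar) (htbar : 0 ≤ tbar)
    (qb : Fin K → ℝ) (hqb_feas : qb ∈ feasible K qbar)
    (hqb_max : ∀ q ∈ feasible K qbar, csObj K u θ qbar tbar c q ≤ csObj K u θ qbar tbar c qb)
    (hexcess : qbar < ∑ i, qb i) :
    ∀ q : Fin K → ℝ, (∀ i, 0 ≤ q i) →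
      ∑ i, (θ i : ℝ) * u (q i) - c * ∑ i, q i ≤
        ∑ i, (θ i : ℝ) * u (qb i) - c * ∑ i, qb i := by

  intro q hq
  have hθ : ∀ i, 0 ≤ (θ i : ℝ) := fun i => (θ i).2.1
  have hconc := hu_conc.concaveOn
  have key : ∀ q' : Fin K → ℝ, (∀ i, 0 ≤ q' i) → qbar ≤ ∑ i, q' i →
      ∑ i, (θ i : ℝ) * u (q' i) - c * ∑ i, q' i ≤
        ∑ i, (θ i : ℝ) * u (qb i) - c * ∑ i, qb i := by
    intro q' h1 h2
    have h := hqb_max q' ⟨h1, h2⟩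
    simp only [csObj] at h
    linarith
  by_cases hd : qbar ≤ ∑ i, q i
  · exact key q hq hd
  push_neg at hd
  have hs0 : 0 < ∑ i, qb i - qbar := by linarith
  have hd0 : 0 < ∑ i, qb i - ∑ i, q i := by linarith [hqb_feas.2]
  set s : ℝ := ∑ i, qb i - qbar with hs
  set d : ℝ := ∑ i, qb i - ∑ i, q i with hdd
  set lam : ℝ := min 1 (s / d) with hlam
  have hlam0 : 0 < lam := lt_min one_pos (div_pos hs0 hd0)
  have hlam1 : lam ≤ 1 := min_le_left _ _
  have hlamd : lam * d ≤ s := by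
    have h1 : lam ≤ s / d := min_le_right _ _
    calc lam * d ≤ (s / d) * d := by nlinarith
    _ = s := by field_simp
  set qm : Fin K → ℝ := fun i => lam * q i + (1 - lam) * qb i with hqm
  have hqm0 : ∀ i, 0 ≤ qm i := fun i =>
    add_nonneg (mul_nonneg hlam0.le (hq i)) (mul_nonneg (by linarith) (hqb_feas.1 i))
  have hsum : ∑ i, qm i = lam * ∑ i, q i + (1 - lam) * ∑ i, qb i := by
    simp [qm, Finset.sum_add_distrib, Finset.mul_sum]
  have hfeas2 : qbar ≤ ∑ i, qm i := by
    rw [hsum]; nlinarith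
  have hmax := key qm hqm0 hfeas2
  have hcc : ∀ i, lam * ((θ i : ℝ) * u (q i)) + (1 - lam) * ((θ i : ℝ) * u (qb i)) ≤
      (θ i : ℝ) * u (qm i) := by
    intro i
    have h := hconc.2 (Set.mem_Ici.2 (hq i)) (Set.mem_Ici.2 (hqb_feas.1 i)) hlam0.le
      (by linarith : (0:ℝ) ≤ 1 - lam) (by ring)
    simp only [smul_eq_mul] at h
    have h2 := mul_le_mul_of_nonneg_left h (hθ i)
    simp only [qm]
    nlinarith
  have hsumcc : lam * (∑ i, (θ i : ℝ) * u (q i)) + (1 - lam) * (∑ i, (θ i : ℝ) * u (qb i)) ≤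
      ∑ i, (θ i : ℝ) * u (qm i) := by
    rw [Finset.mul_sum, Finset.mul_sum, ← Finset.sum_add_distrib]
    exact Finset.sum_le_sum fun i _ => hcc i
  rw [hsum] at hmax
  have hfinal : lam * (∑ i, (θ i : ℝ) * u (q i) - c * ∑ i, q i) ≤
      lam * (∑ i, (θ i : ℝ) * u (qb i) - c * ∑ i, qb i) := by nlinarith
  exact le_of_mul_le_mul_left hfinal hlam0


end
end
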